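/- Assume σ is a d-dimensional simplicial cone with linearly independent primitive generators v_1, …, v_d ∈ ℤ^d. Let B ⊆ σ^∨ ∩ ℤ^d be finite and nonempty with σ^∨ \ Q(B) bounded, let ∂Q(B) be the topological boundary of Q(B) in the subspace topology of σ^∨, and define the partial order u ≤_σ u′ on ∂Q(B) by ⟨u, v_j⟩ ≤ ⟨u′, v_j⟩ for all j = 1, …, d. If u ∈ ∂Q(B) is a maximal element with respect to ≤_σ, then for every j = 1, …, d there exists b ∈ B with u − b ∈ σ^∨ and ⟨u − b, v_j⟩ = 0. In particular, every such maximal element lies in ℚ^d, and the set of maximal elements of ∂Q(B) with respect to ≤_σ is finite. -/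

import Mathlib

open Finset Filter Pointwise

noncomputable section

namespace Paper

variable {d n : ℕ}

/-- The standard inner product pairing on `ℝ^d`. -/
def pair (u w : Fin d → ℝ) : ℝ := ∑ i, u i * w i

/-- The coercion `ℤ^d → ℝ^d`. -/
def toR (u : Fin d → ℤ) : Fin d → ℝ := fun i => (u i : ℝ)

/-- The cone generated by the integer vectors `v 1, …, v n`. -/
def cone (v : Fin n → Fin d → ℤ) : Set (Fin d → ℝ) :=
  {x | ∃ c : Fin n → ℝ, (∀ j, 0 ≤ c j) ∧ x = ∑ j, c j • toR (v j)}

/-- The dual cone `σ^∨ = {u | ⟨u, x⟩ ≥ 0 for all x ∈ σ}`. -/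
def dualCone (v : Fin n → Fin d → ℤ) : Set (Fin d → ℝ) :=
  {u | ∀ x ∈ cone v, 0 ≤ pair u x}

/-- Strong convexity of the cone generated by `v`. -/
def StronglyConvex (v : Fin n → Fin d → ℤ) : Prop :=
  ∀ x ∈ cone v, -x ∈ cone v → x = 0

/-- An integer vector is primitive if the gcd of its coordinates is 1. -/
def IsPrimitive (w : Fin d → ℤ) : Prop := Finset.univ.gcd w = 1

/-- The cone generated by `v` is `d`-dimensional. -/
def FullDim (v : Fin n → Fin d → ℤ) : Prop :=
  Submodule.span ℝ (Set.range fun j => toR (v j)) = ⊤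

/-- The Newton polyhedron `P(A) = conv(A) + σ^∨`. -/
def newton (v : Fin n → Fin d → ℤ) (A : Finset (Fin d → ℤ)) : Set (Fin d → ℝ) :=
  convexHull ℝ (toR '' ↑A) + dualCone v

/-- The set `Q(A) = ⋃_{a ∈ A} (a + σ^∨)`. -/
def QSet (v : Fin n → Fin d → ℤ) (A : Finset (Fin d → ℤ)) : Set (Fin d → ℝ) :=
  ⋃ a ∈ A, (toR a +ᵥ dualCone v)

/-- `λ_A(u) = sup {λ > 0 | u ∈ λ·P(A)}` (and `0` if no such `λ` exists;
note `Real.sSup` of the empty set is `0`). -/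
def lam (v : Fin n → Fin d → ℤ) (A : Finset (Fin d → ℤ)) (u : Fin d → ℝ) : ℝ :=
  sSup {l : ℝ | 0 < l ∧ u ∈ l • newton v A}

/-- `Q(m)` for the maximal monomial ideal, whose exponent set is
`(σ^∨ ∩ ℤ^d) \ {0}`. -/
def Qm (v : Fin n → Fin d → ℤ) : Set (Fin d → ℝ) :=
  ⋃ a ∈ {a : Fin d → ℤ | toR a ∈ dualCone v ∧ a ≠ 0}, (toR a +ᵥ dualCone v)

/-- The set `O = {u ∈ σ^∨ | ⟨u, v_j⟩ ≥ 1 for some j}`. -/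
def OSet (v : Fin n → Fin d → ℤ) : Set (Fin d → ℝ) :=
  {u ∈ dualCone v | ∃ j, 1 ≤ pair u (toR (v j))}


/-- The topological boundary of `s` inside `X`, with respect to the subspace
topology on `X`. -/
def boundaryIn (X s : Set (Fin d → ℝ)) : Set (Fin d → ℝ) :=
  X ∩ closure s ∩ closure (X \ s)

/-- The order `u ≤_σ u'` given by `⟨u, v_j⟩ ≤ ⟨u', v_j⟩` for all `j`. -/
def leSigma (v : Fin n → Fin d → ℤ) (u u' : Fin d → ℝ) : Prop :=
  ∀ j, pair u (toR (v j)) ≤ pair u' (toR (v j))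

open Matrix

-- helper lemmas
lemma pair_add_left (x y w : Fin d → ℝ) : pair (x + y) w = pair x w + pair y w := by
  simp [pair, add_mul, Finset.sum_add_distrib]

lemma pair_sub_left (x y w : Fin d → ℝ) : pair (x - y) w = pair x w - pair y w := by
  simp [pair, sub_mul, Finset.sum_sub_distrib]

lemma pair_smul_left (c : ℝ) (x w : Fin d → ℝ) : pair (c • x) w = c * pair x w := by
  simp [pair, Finset.mul_sum, mul_assoc]

lemma pair_smul_right (c : ℝ) (x w : Fin d → ℝ) : pair x (c • w) = c * pair x w := by
  rw [pair, pair, Finset.mul_sum]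
  exact Finset.sum_congr rfl fun i _ => by simp; ring

lemma pair_sum_right {ι : Type*} (s : Finset ι) (u : Fin d → ℝ) (f : ι → Fin d → ℝ) :
    pair u (∑ j ∈ s, f j) = ∑ j ∈ s, pair u (f j) := by
  simp only [pair, Finset.sum_apply, Finset.mul_sum]
  exact Finset.sum_comm

lemma mem_cone_self (v : Fin n → Fin d → ℤ) (j : Fin n) : toR (v j) ∈ cone v := by
  refine ⟨fun i => if i = j then 1 else 0, fun i => by positivity, ?_⟩
  simp [ite_smul]

lemma mem_dualCone_iff {v : Fin n → Fin d → ℤ} {u : Fin d → ℝ} :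
    u ∈ dualCone v ↔ ∀ j, 0 ≤ pair u (toR (v j)) := by
  constructor
  · intro h j; exact h _ (mem_cone_self v j)
  · rintro h x ⟨c, hc, rfl⟩
    rw [pair_sum_right]
    refine Finset.sum_nonneg fun j _ => ?_
    rw [pair_smul_right]
    exact mul_nonneg (hc j) (h j)

lemma pair_continuous (w : Fin d → ℝ) : Continuous fun u : Fin d → ℝ => pair u w := by
  unfold pair
  exact continuous_finset_sum _ fun i _ => (continuous_apply i).mul continuous_const

lemma isClosed_dualCone (v : Fin n → Fin d → ℤ) : IsClosed (dualCone v) := by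
  have : dualCone v = ⋂ j, {u : Fin d → ℝ | 0 ≤ pair u (toR (v j))} := by
    ext u; simp [mem_dualCone_iff, Set.mem_iInter]
  rw [this]
  exact isClosed_iInter fun j => isClosed_le continuous_const (pair_continuous _)

lemma mem_QSet {v : Fin n → Fin d → ℤ} {B : Finset (Fin d → ℤ)} {x : Fin d → ℝ} :
    x ∈ QSet v B ↔ ∃ b ∈ B, x - toR b ∈ dualCone v := by
  simp only [QSet, Set.mem_iUnion, exists_prop]
  refine exists_congr fun b => and_congr_right fun _ => ?_
  rw [Set.mem_vadd_set_iff_neg_vadd_mem]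
  simp [vadd_eq_add, neg_add_eq_sub]

lemma isClosed_QSet (v : Fin n → Fin d → ℤ) (B : Finset (Fin d → ℤ)) :
    IsClosed (QSet v B) := by
  refine Set.Finite.isClosed_biUnion (B.finite_toSet) fun b _ => ?_
  rw [← Set.image_vadd]
  exact (Homeomorph.addLeft (toR b)).isClosedMap _ (isClosed_dualCone v)


def mat (v : Fin d → Fin d → ℤ) : Matrix (Fin d) (Fin d) ℝ := Matrix.of fun i => toR (v i)

lemma mat_mulVec (v : Fin d → Fin d → ℤ) (z : Fin d → ℝ) (j : Fin d) :
    (mat v *ᵥ z) j = pair z (toR (v j)) := by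
  simp [mat, Matrix.mulVec, dotProduct, pair, mul_comm]

lemma isUnit_mat (v : Fin d → Fin d → ℤ) (hli : LinearIndependent ℝ fun j => toR (v j)) :
    IsUnit (mat v) :=
  Matrix.linearIndependent_rows_iff_isUnit.mp hli

lemma eq_of_pair_eq (v : Fin d → Fin d → ℤ) (hli : LinearIndependent ℝ fun j => toR (v j))
    {x y : Fin d → ℝ} (h : ∀ j, pair x (toR (v j)) = pair y (toR (v j))) : x = y := by
  have hinj := Matrix.mulVec_injective_iff_isUnit.mpr (isUnit_mat v hli)
  apply hinj; funext j; rw [mat_mulVec, mat_mulVec]; exact h j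

lemma exists_dual (v : Fin d → Fin d → ℤ) (hli : LinearIndependent ℝ fun j => toR (v j))
    (j : Fin d) :
    ∃ e : Fin d → ℝ, ∀ i, pair e (toR (v i)) = if i = j then 1 else 0 := by
  have hu := isUnit_mat v hli
  refine ⟨(mat v)⁻¹ *ᵥ Pi.single j 1, fun i => ?_⟩
  rw [← mat_mulVec, Matrix.mulVec_mulVec,
    Matrix.mul_nonsing_inv _ ((Matrix.isUnit_iff_isUnit_det _).mp hu), Matrix.one_mulVec]
  simp [Pi.single_apply]

lemma rational_of_integer_pairs (v : Fin d → Fin d → ℤ)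
    (hli : LinearIndependent ℝ fun j => toR (v j)) {u : Fin d → ℝ} (c : Fin d → ℤ)
    (h : ∀ j, pair u (toR (v j)) = (c j : ℝ)) : ∃ z : Fin d → ℚ, u = fun i => (z i : ℝ) := by
  set Mz : Matrix (Fin d) (Fin d) ℤ := Matrix.of fun i k => v i k with hMz
  set Mq : Matrix (Fin d) (Fin d) ℚ := Mz.map Int.cast with hMq
  have hmm : mat v = Mz.map Int.cast := by
    ext i k; simp [mat, hMz, toR]
  have hdet : ((Mz.det : ℤ) : ℝ) = (mat v).det := by
    rw [hmm]
    exact (RingHom.map_det (Int.castRingHom ℝ) Mz).trans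
      (by rw [RingHom.mapMatrix_apply, Int.coe_castRingHom])
  have hdR : (mat v).det ≠ 0 :=
    ((Matrix.isUnit_iff_isUnit_det _).mp (isUnit_mat v hli)).ne_zero
  have hdz : Mz.det ≠ 0 := by
    intro h0; rw [h0] at hdet; simp at hdet; exact hdR hdet.symm
  have hdq : IsUnit Mq.det := by
    have : Mq.det = ((Mz.det : ℤ) : ℚ) := by
      rw [hMq]
      exact ((RingHom.map_det (Int.castRingHom ℚ) Mz).trans
        (by rw [RingHom.mapMatrix_apply, Int.coe_castRingHom])).symm
    rw [this]
    exact isUnit_iff_ne_zero.mpr (by exact_mod_cast hdz)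
  set zq : Fin d → ℚ := Mq⁻¹ *ᵥ (fun j => (c j : ℚ)) with hzq
  have hz : Mq *ᵥ zq = fun j => (c j : ℚ) := by
    rw [hzq, Matrix.mulVec_mulVec, Matrix.mul_nonsing_inv _ hdq, Matrix.one_mulVec]
  refine ⟨zq, ?_⟩
  have hinj := Matrix.mulVec_injective_iff_isUnit.mpr (isUnit_mat v hli)
  apply hinj
  funext j
  rw [mat_mulVec, mat_mulVec, h j]
  have h1 := congrFun hz j
  simp only [Matrix.mulVec, dotProduct, hMq, hMz, Matrix.map_apply, Matrix.of_apply] at h1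
  have h2 : ((∑ k, (v j k : ℚ) * zq k : ℚ) : ℝ) = (c j : ℝ) := by exact_mod_cast congrArg (fun q : ℚ => (q : ℝ)) h1
  rw [pair, ← h2]
  push_cast
  exact Finset.sum_congr rfl fun i _ => by push_cast [toR]; ring


lemma key_step (hd0 : 1 ≤ d) (v : Fin d → Fin d → ℤ)
    (hli : LinearIndependent ℝ fun j => toR (v j))
    (B : Finset (Fin d → ℤ)) (u : Fin d → ℝ)
    (hu : u ∈ boundaryIn (dualCone v) (QSet v B))
    (hmax : ∀ u' ∈ boundaryIn (dualCone v) (QSet v B), leSigma v u u' → u' = u)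
    (j : Fin d) :
    ∃ b ∈ B, u - toR b ∈ dualCone v ∧ pair (u - toR b) (toR (v j)) = 0 := by
  classical
  obtain ⟨⟨huD, huQc⟩, huBc⟩ := hu
  have huQ : u ∈ QSet v B := (isClosed_QSet v B).closure_subset huQc
  by_contra hcon
  push_neg at hcon
  have hdne : (Finset.univ : Finset (Fin d)).Nonempty := ⟨⟨0, hd0⟩, Finset.mem_univ _⟩
  set f : (Fin d → ℤ) → ℝ := fun b =>
    if u - toR b ∈ dualCone v then pair (u - toR b) (toR (v j))
    else -(Finset.univ.inf' hdne fun i => pair (u - toR b) (toR (v i))) with hf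
  have hBne' : B.Nonempty := by
    obtain ⟨b, hb, _⟩ := mem_QSet.mp huQ; exact ⟨b, hb⟩
  set η : ℝ := B.inf' hBne' f with hη
  have hfpos : ∀ b ∈ B, 0 < f b := by
    intro b hb
    simp only [hf]
    split_ifs with hbd
    · rcases lt_or_eq_of_le ((mem_dualCone_iff.mp hbd) j) with h | h
      · exact h
      · exact absurd h.symm (hcon b hb hbd)
    · have hex : ∃ i, pair (u - toR b) (toR (v i)) < 0 := by
        by_contra hno; push_neg at hno
        exact hbd (mem_dualCone_iff.mpr fun i => hno i)
      obtain ⟨i, hi⟩ := hex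
      have h2 := Finset.inf'_le (fun i => pair (u - toR b) (toR (v i))) (Finset.mem_univ i)
      linarith
  have hηpos : 0 < η := (Finset.lt_inf'_iff hBne').mpr hfpos
  have hηle : ∀ b ∈ B, η ≤ f b := fun b hb => Finset.inf'_le f hb
  obtain ⟨e, he⟩ := exists_dual v hli j
  set t : ℝ := η / 2 with ht
  have htpos : 0 < t := by rw [ht]; linarith
  -- uniform bound on the pairings
  set K : ℝ := 1 + Finset.univ.sup' hdne (fun i => ∑ k, |(v i k : ℝ)|) with hK
  have hsup_nonneg : 0 ≤ Finset.univ.sup' hdne (fun i => ∑ k, |(v i k : ℝ)|) := by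
    refine le_trans ?_ (Finset.le_sup' (fun i => ∑ k, |(v i k : ℝ)|)
      (Finset.mem_univ (⟨0, hd0⟩ : Fin d)))
    exact Finset.sum_nonneg fun k _ => abs_nonneg _
  have hKpos : 0 < K := by rw [hK]; linarith
  have hbound : ∀ (z : Fin d → ℝ) (i : Fin d), |pair z (toR (v i))| ≤ K * ‖z‖ := by
    intro z i
    have h1 : |pair z (toR (v i))| ≤ ∑ k, |z k * (v i k : ℝ)| :=
      Finset.abs_sum_le_sum_abs _ _
    have h2 : ∀ k : Fin d, |z k * (v i k : ℝ)| ≤ ‖z‖ * |(v i k : ℝ)| := by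
      intro k
      rw [abs_mul]
      exact mul_le_mul_of_nonneg_right
        (by simpa [Real.norm_eq_abs] using norm_le_pi_norm z k) (abs_nonneg _)
    have h3 : (∑ k, |(v i k : ℝ)|) ≤ K := by
      rw [hK]
      have := Finset.le_sup' (fun i => ∑ k, |(v i k : ℝ)|) (Finset.mem_univ i)
      linarith
    calc |pair z (toR (v i))| ≤ ∑ k, |z k * (v i k : ℝ)| := h1
      _ ≤ ∑ k, ‖z‖ * |(v i k : ℝ)| := Finset.sum_le_sum fun k _ => h2 k
      _ = (∑ k, |(v i k : ℝ)|) * ‖z‖ := by rw [← Finset.mul_sum, mul_comm]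
      _ ≤ K * ‖z‖ := mul_le_mul_of_nonneg_right h3 (norm_nonneg z)
  set r : ℝ := (η / 4) / K with hr
  have hrpos : 0 < r := by positivity
  set u' : Fin d → ℝ := u + t • e with hu'
  have hpair_u' : ∀ i, pair u' (toR (v i)) =
      pair u (toR (v i)) + t * (if i = j then 1 else 0) := by
    intro i; rw [hu', pair_add_left, pair_smul_left, he i]
  have hu'D : u' ∈ dualCone v := by
    rw [mem_dualCone_iff]
    intro i
    rw [hpair_u' i]
    have := mem_dualCone_iff.mp huD i
    split_ifs <;> linarith
  have hu'Q : u' ∈ QSet v B := by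
    obtain ⟨b0, hb0B, hb0D⟩ := mem_QSet.mp huQ
    refine mem_QSet.mpr ⟨b0, hb0B, mem_dualCone_iff.mpr fun i => ?_⟩
    have heq : u' - toR b0 = (u - toR b0) + t • e := by rw [hu']; abel
    rw [heq, pair_add_left, pair_smul_left, he i]
    have := mem_dualCone_iff.mp hb0D i
    split_ifs <;> linarith
  have hu'B : u' ∈ closure (dualCone v \ QSet v B) := by
    rw [Metric.mem_closure_iff]
    intro ε0 hε0
    obtain ⟨w, hw, hwd⟩ := Metric.mem_closure_iff.mp huBc (min r ε0) (lt_min hrpos hε0)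
    refine ⟨w + t • e, ?_, ?_⟩
    · constructor
      · rw [mem_dualCone_iff]
        intro i
        rw [pair_add_left, pair_smul_left, he i]
        have := mem_dualCone_iff.mp hw.1 i
        split_ifs <;> linarith
      · -- w + t•e ∉ QSet
        intro hmem
        obtain ⟨b, hbB, hbD⟩ := mem_QSet.mp hmem
        have hpert : ∀ i, |pair (u - w) (toR (v i))| < η / 4 := by
          intro i
          have h1 : ‖u - w‖ < r := by
            rw [← dist_eq_norm]; exact lt_of_lt_of_le hwd (min_le_left _ _)
          have h2 := hbound (u - w) i
          have h3 : K * ‖u - w‖ < K * r := by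
            exact mul_lt_mul_of_pos_left h1 hKpos
          have h4 : K * r = η / 4 := by
            rw [hr]; field_simp
          exact lt_of_le_of_lt h2 (lt_of_lt_of_le h3 (le_of_eq h4))
        have hdiff : ∀ i, pair (u - toR b) (toR (v i)) - pair (w - toR b) (toR (v i))
            = pair (u - w) (toR (v i)) := by
          intro i
          rw [← pair_sub_left]
          congr 1
          abel
        have hpw' : ∀ i, pair (w + t • e - toR b) (toR (v i)) =
            pair (w - toR b) (toR (v i)) + t * (if i = j then 1 else 0) := by
          intro i
          rw [show w + t • e - toR b = (w - toR b) + t • e by abel,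
            pair_add_left, pair_smul_left, he i]
        by_cases hbS : u - toR b ∈ dualCone v
        · have hfb : η ≤ pair (u - toR b) (toR (v j)) := by
            have := hηle b hbB; simp only [hf] at this; simpa [hbS] using this
          have hex : ∃ i, pair (w - toR b) (toR (v i)) < 0 := by
            by_contra hno; push_neg at hno
            exact hw.2 (mem_QSet.mpr ⟨b, hbB, mem_dualCone_iff.mpr hno⟩)
          obtain ⟨i, hi⟩ := hex
          have h1 : 0 ≤ pair (w + t • e - toR b) (toR (v i)) := mem_dualCone_iff.mp hbD i
          have h2 := hpw' i
          by_cases hij : i = j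
          · subst hij
            have ha := abs_lt.mp (hpert i)
            have hdd := hdiff i
            linarith
          · rw [if_neg hij] at h2
            linarith
        · have hfb : η ≤ -(Finset.univ.inf' hdne fun i => pair (u - toR b) (toR (v i))) := by
            have := hηle b hbB; simp only [hf] at this; simpa [hbS] using this
          obtain ⟨i, _, hieq⟩ := Finset.exists_mem_eq_inf' hdne
            (fun i => pair (u - toR b) (toR (v i)))
          have hineg : pair (u - toR b) (toR (v i)) ≤ -η := by rw [← hieq]; linarith
          have h1 : 0 ≤ pair (w + t • e - toR b) (toR (v i)) := mem_dualCone_iff.mp hbD i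
          have h2 := hpw' i
          have ha := abs_lt.mp (hpert i)
          have hdd := hdiff i
          by_cases hij : i = j
          · rw [if_pos hij] at h2
            rw [ht] at h2
            linarith
          · rw [if_neg hij] at h2
            linarith
    · have heq : u' - (w + t • e) = u - w := by rw [hu']; abel
      rw [dist_eq_norm, heq, ← dist_eq_norm]
      exact lt_of_lt_of_le hwd (min_le_right _ _)
  have hu'mem : u' ∈ boundaryIn (dualCone v) (QSet v B) :=
    ⟨⟨hu'D, subset_closure hu'Q⟩, hu'B⟩
  have hle : leSigma v u u' := by
    intro i
    rw [hpair_u' i]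
    split_ifs <;> linarith
  have heq := hmax u' hu'mem hle
  have hj := hpair_u' j
  rw [heq, if_pos rfl] at hj
  linarith



/-- every maximal element `u` of `∂Q(B)` with respect to `≤_σ`
satisfies: for each `j` there is `b ∈ B` with `u - b ∈ σ^∨` and
`⟨u - b, v_j⟩ = 0`; in particular any such `u` is rational, and the set of
maximal elements of `∂Q(B)` is finite. -/
theorem maximal_boundary_elements
    (d : ℕ) (hd : 1 ≤ d)
    (v : Fin d → Fin d → ℤ)
    (hsc : StronglyConvex v) (hprim : ∀ j, IsPrimitive (v j))
    (hli : LinearIndependent ℝ fun j => toR (v j))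
    (B : Finset (Fin d → ℤ)) (hBne : B.Nonempty)
    (hBl : ∀ b ∈ B, toR b ∈ dualCone v)
    (hbdd : Bornology.IsBounded (dualCone v \ QSet v B)) :
    (∀ u ∈ boundaryIn (dualCone v) (QSet v B),
      (∀ u' ∈ boundaryIn (dualCone v) (QSet v B), leSigma v u u' → u' = u) →
      (∀ j, ∃ b ∈ B, u - toR b ∈ dualCone v ∧ pair (u - toR b) (toR (v j)) = 0) ∧
      ∃ z : Fin d → ℚ, u = fun i => (z i : ℝ)) ∧
    {u | u ∈ boundaryIn (dualCone v) (QSet v B) ∧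
      ∀ u' ∈ boundaryIn (dualCone v) (QSet v B), leSigma v u u' → u' = u}.Finite := by
  classical
  have part1 : ∀ u ∈ boundaryIn (dualCone v) (QSet v B),
      (∀ u' ∈ boundaryIn (dualCone v) (QSet v B), leSigma v u u' → u' = u) →
      (∀ j, ∃ b ∈ B, u - toR b ∈ dualCone v ∧ pair (u - toR b) (toR (v j)) = 0) ∧
      ∃ z : Fin d → ℚ, u = fun i => (z i : ℝ) := by
    intro u hu hmax
    have hkey := fun j => key_step hd v hli B u hu hmax j
    refine ⟨hkey, ?_⟩
    choose b hbB hbD hbp using hkey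
    set c : Fin d → ℤ := fun j => ∑ i, b j i * v j i with hc
    apply rational_of_integer_pairs v hli c
    intro j
    have h1 := hbp j
    rw [pair_sub_left] at h1
    have h2 : pair (toR (b j)) (toR (v j)) = (c j : ℝ) := by
      simp only [pair, toR, hc]
      push_cast
      ring
    linarith
  refine ⟨part1, ?_⟩
  set F : (Fin d → ℝ) → Fin d → (Fin d → ℤ) := fun u j =>
    if h : ∃ b ∈ B, u - toR b ∈ dualCone v ∧ pair (u - toR b) (toR (v j)) = 0
    then h.choose else 0 with hF
  have hFmem : ∀ u ∈ {u | u ∈ boundaryIn (dualCone v) (QSet v B) ∧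
      ∀ u' ∈ boundaryIn (dualCone v) (QSet v B), leSigma v u u' → u' = u}, ∀ j,
      F u j ∈ B ∧ u - toR (F u j) ∈ dualCone v ∧
        pair (u - toR (F u j)) (toR (v j)) = 0 := by
    intro u hu j
    have hex := key_step hd v hli B u hu.1 hu.2 j
    have hFe : F u j = hex.choose := by
      simp only [hF]
      rw [dif_pos hex]
    rw [hFe]
    exact hex.choose_spec
  apply Set.Finite.of_finite_image (f := F)
  · apply Set.Finite.subset (Set.Finite.pi fun _ : Fin d => B.finite_toSet)
    rintro g ⟨u, hu, rfl⟩
    exact Set.mem_univ_pi.mpr fun j => (hFmem u hu j).1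
  · intro u hu u' hu' hFeq
    apply eq_of_pair_eq v hli
    intro j
    have h1 := hFmem u hu j
    have h2 := hFmem u' hu' j
    have e1 : pair u (toR (v j)) = pair (toR (F u j)) (toR (v j)) := by
      have h3 := h1.2.2; rw [pair_sub_left] at h3; linarith
    have e2 : pair u' (toR (v j)) = pair (toR (F u' j)) (toR (v j)) := by
      have h3 := h2.2.2; rw [pair_sub_left] at h3; linarith
    rw [e1, e2, hFeq]


end Paper
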